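/- In a full coset relation algebra, the atom R_{xy,α} satisfies R_{xy,α} ⊗ (R_{xy,α})⁻¹ = R_{xy,α} ∘ (R_{xy,α})⁻¹ = ⋃{R_{xx,g} : g ∈ H_{xy}}, where the union is over singleton-coset atoms of G_x × G_x indexed by elements of the subgroup H_{xy}. -/

import Mathlib

open scoped Pointwise

def cosetSet {G : Type*} [Group G] (H : Subgroup G) (q : G ⧸ H) : Set G :=
  {g | (QuotientGroup.mk g : G ⧸ H) = q}

/-- The atom `R_{xy,α}` of the full coset relation algebra. -/
def cosetRel {Gx Gy : Type*} [Group Gx] [Group Gy] (H : Subgroup Gx) [H.Normal]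
    (K : Subgroup Gy) [K.Normal] (φ : (Gx ⧸ H) ≃* (Gy ⧸ K)) (α : Gx ⧸ H) :
    Set (Gx × Gy) :=
  ⋃ γ : Gx ⧸ H, cosetSet H γ ×ˢ (cosetSet K (φ γ) * cosetSet K (φ α))

/-- Since `H_{xx} = {e_x}`, the atoms of `G_x × G_x` are indexed by group elements `g`:
`R_{xx,g} = {(u, u·g) : u ∈ G_x}`. -/
def cosetRelxx {Gx : Type*} [Group Gx] (g : Gx) : Set (Gx × Gx) :=
  {p | p.2 = p.1 * g}

def relComp {A B C : Type*} (R : Set (A × B)) (S : Set (B × C)) : Set (A × C) :=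
  {p | ∃ v, (p.1, v) ∈ R ∧ (v, p.2) ∈ S}

def preimSet {Gx Gy : Type*} [Group Gx] [Group Gy] {H : Subgroup Gx} [H.Normal]
    {K : Subgroup Gy} [K.Normal] (φ : (Gx ⧸ H) ≃* (Gy ⧸ K)) (T : Set Gy) : Set Gx :=
  {g | ∃ t ∈ T, φ (QuotientGroup.mk g) = (QuotientGroup.mk t : Gy ⧸ K)}

/-- The shifted product `R_{xy,α} ⊗ R_{yx,δ}`, where the atoms over the pair `(y,x)` are
indexed (via the convention `H_{yx,γ} = K_{xy,γ}`) by elements `δ : G_y ⧸ K_{xy}`, and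
where the shifting coset satisfies `C_{xyx} = H_{xy}`:
`⊗` is the union of those atoms `R_{xx,g}` with
`g ∈ φ_{xy}⁻¹[K_{xy,α} ∘ H_{yx,δ}] ∘ C_{xyx}`. -/
def otimesXYX {Gx Gy : Type*} [Group Gx] [Group Gy] (Hxy : Subgroup Gx) [Hxy.Normal]
    (Kxy : Subgroup Gy) [Kxy.Normal] (φ : (Gx ⧸ Hxy) ≃* (Gy ⧸ Kxy))
    (α : Gx ⧸ Hxy) (δ : Gy ⧸ Kxy) : Set (Gx × Gx) :=
  ⋃ g ∈ preimSet φ (cosetSet Kxy (φ α) * cosetSet Kxy δ) * (Hxy : Set Gx),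
    cosetRelxx g

lemma mem_cosetSet_mul {G : Type*} [Group G] (K : Subgroup G) [K.Normal]
    (a b : G ⧸ K) (g : G) :
    g ∈ cosetSet K a * cosetSet K b ↔ (QuotientGroup.mk g : G ⧸ K) = a * b := by
  constructor
  · rintro ⟨u, hu, v, hv, rfl⟩
    simp only [cosetSet, Set.mem_setOf_eq] at hu hv
    simp [← hu, ← hv]
  · intro h
    obtain ⟨u, rfl⟩ := QuotientGroup.mk_surjective a
    refine ⟨u, rfl, u⁻¹ * g, ?_, by group⟩
    simp only [cosetSet, Set.mem_setOf_eq, QuotientGroup.mk_mul, QuotientGroup.mk_inv, h]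
    group

lemma mem_cosetRel {Gx Gy : Type*} [Group Gx] [Group Gy] (H : Subgroup Gx) [H.Normal]
    (K : Subgroup Gy) [K.Normal] (φ : (Gx ⧸ H) ≃* (Gy ⧸ K)) (α : Gx ⧸ H) (p : Gx × Gy) :
    p ∈ cosetRel H K φ α ↔
      (QuotientGroup.mk p.2 : Gy ⧸ K) = φ (QuotientGroup.mk p.1) * φ α := by
  simp only [cosetRel, Set.mem_iUnion, Set.mem_prod, mem_cosetSet_mul]
  constructor
  · rintro ⟨γ, hγ, h⟩
    simp only [cosetSet, Set.mem_setOf_eq] at hγ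
    rw [← hγ] at h; exact h
  · intro h; exact ⟨QuotientGroup.mk p.1, rfl, h⟩

/-- Lemma: `R_{xy,α} ⊗ (R_{xy,α})⁻¹ = R_{xy,α} ∘ (R_{xy,α})⁻¹ = ⋃ {R_{xx,g} : g ∈ H_{xy}}`,
the converse of `R_{xy,α}` being the atom `R_{yx,δ}` with `δ` the index corresponding to
the coset of inverses, `δ = φ(α⁻¹)`. -/
theorem atom_otimes_converse_eq_comp_eq_union
    {Gx Gy : Type*} [Group Gx] [Group Gy] (Hxy : Subgroup Gx) [Hxy.Normal]
    (Kxy : Subgroup Gy) [Kxy.Normal] (φ : (Gx ⧸ Hxy) ≃* (Gy ⧸ Kxy)) (α : Gx ⧸ Hxy) :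
    otimesXYX Hxy Kxy φ α (φ α⁻¹) =
        relComp (cosetRel Hxy Kxy φ α) (Prod.swap ⁻¹' (cosetRel Hxy Kxy φ α)) ∧
    relComp (cosetRel Hxy Kxy φ α) (Prod.swap ⁻¹' (cosetRel Hxy Kxy φ α)) =
        ⋃ g ∈ (Hxy : Set Gx), cosetRelxx g := by
  have hcomp : relComp (cosetRel Hxy Kxy φ α) (Prod.swap ⁻¹' (cosetRel Hxy Kxy φ α)) =
      ⋃ g ∈ (Hxy : Set Gx), cosetRelxx g := by
    ext ⟨a, c⟩
    simp only [relComp, Set.mem_setOf_eq, Set.mem_preimage, Prod.swap, mem_cosetRel,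
      Set.mem_iUnion, cosetRelxx]
    constructor
    · rintro ⟨v, h1, h2⟩
      have : φ (QuotientGroup.mk a) = φ (QuotientGroup.mk c) := by
        have := h1.symm.trans h2
        exact mul_right_cancel this
      have hac : (QuotientGroup.mk a : Gx ⧸ Hxy) = QuotientGroup.mk c := φ.injective this
      have : a⁻¹ * c ∈ Hxy := by
        rwa [QuotientGroup.eq] at hac
      exact ⟨a⁻¹ * c, this, by group⟩
    · rintro ⟨g, hg, rfl⟩
      have hac : (QuotientGroup.mk (a * g) : Gx ⧸ Hxy) = QuotientGroup.mk a := by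
        rw [QuotientGroup.eq]
        simpa using Hxy.inv_mem (by simpa [mul_assoc] using hg)
      obtain ⟨v, hv⟩ := QuotientGroup.mk_surjective (φ (QuotientGroup.mk a) * φ α)
      exact ⟨v, hv, by rw [hv, hac]⟩
  refine ⟨?_, hcomp⟩
  rw [hcomp]
  have hpre : preimSet φ (cosetSet Kxy (φ α) * cosetSet Kxy (φ α⁻¹)) = (Hxy : Set Gx) := by
    ext g
    simp only [preimSet, Set.mem_setOf_eq, mem_cosetSet_mul]
    constructor
    · rintro ⟨t, ht, hφ⟩
      rw [ht, ← map_mul, mul_inv_cancel, map_one] at hφ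
      have : (QuotientGroup.mk g : Gx ⧸ Hxy) = 1 := φ.injective (by simpa using hφ)
      simpa [QuotientGroup.eq_one_iff] using this
    · intro hg
      refine ⟨1, by simp [← map_mul], ?_⟩
      have : (QuotientGroup.mk g : Gx ⧸ Hxy) = 1 := by
        simpa [QuotientGroup.eq_one_iff] using hg
      simp [this]
  have hHH : (Hxy : Set Gx) * (Hxy : Set Gx) = (Hxy : Set Gx) := by
    ext g
    constructor
    · rintro ⟨u, hu, v, hv, rfl⟩; exact Hxy.mul_mem hu hv
    · intro hg; exact ⟨g, hg, 1, Hxy.one_mem, mul_one g⟩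
  rw [otimesXYX, hpre, hHH]
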